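/- Let (V_j)_{j≥0} be Banach spaces and T_j : V_j → V_{j+1} bounded linear, T^n := T_{n-1} ∘ ⋯ ∘ T_0. Suppose for some m ≥ 1 there are reals l̄ > l̲ such that: (a) lim_n (1/n) log D_m(T^n) = m·l̄, (b) lim_n (1/n) log D_{m+1}(T^n) ≤ m·l̄ + l̲, and for each n there are unit vectors e^1_n,…,e^m_n in V_0 with Vol(T^n e^1_n,…,T^n e^m_n) ≥ (1/2) D_m(T^n). Let E_n := span{e^1_n,…,e^m_n}, E²_n := T^n E_n, choose a closed complement F²_n of E²_n in V_n with ‖π_{E²_n ∥ F²_n}‖ ≤ √m, and set F_n := (T^n)^{-1}(F²_n). Then for every unit vector v ∈ F_n, ‖T^n v‖ ≤ 2(√m + 1) D_{m+1}(T^n) / D_m(T^n). -/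

import Mathlib

/-- `Vol(x_1,…,x_k) = ‖x_1‖ ∏_{i≥2} d(x_i, span{x_j : j < i})`; note that the distance of
`x 0` to the span of the empty family is `‖x 0‖`. -/
noncomputable def Vol {Y : Type*} [NormedAddCommGroup Y] [NormedSpace ℝ Y]
    {k : ℕ} (x : Fin k → Y) : ℝ :=
  ∏ i : Fin k, Metric.infDist (x i) (Submodule.span ℝ (x '' {j | j < i}) : Set Y)

/-- `D_k(T) = sup { Vol(Tx_1,…,Tx_k) : ‖x_i‖ = 1 }`. -/
noncomputable def Dk {X Y : Type*} [NormedAddCommGroup X] [NormedSpace ℝ X]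
    [NormedAddCommGroup Y] [NormedSpace ℝ Y] (k : ℕ) (T : X →L[ℝ] Y) : ℝ :=
  sSup {v : ℝ | ∃ x : Fin k → X, (∀ i, ‖x i‖ = 1) ∧ v = Vol (fun i => T (x i))}


open Filter

section Aux

variable {X Y Z : Type*} [NormedAddCommGroup X] [NormedSpace ℝ X]
  [NormedAddCommGroup Y] [NormedSpace ℝ Y] [NormedAddCommGroup Z] [NormedSpace ℝ Z]

lemma vol_nonneg {k : ℕ} (x : Fin k → Y) : 0 ≤ Vol x :=
  Finset.prod_nonneg fun _ _ => Metric.infDist_nonneg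

lemma infDist_span_le_norm {k : ℕ} (x : Fin k → Y) (i : Fin k) (z : Y) :
    Metric.infDist z (Submodule.span ℝ (x '' {j | j < i}) : Set Y) ≤ ‖z‖ := by
  simpa using Metric.infDist_le_dist_of_mem
    (Submodule.zero_mem (Submodule.span ℝ (x '' {j | j < i})))

lemma vol_le_prod {k : ℕ} (x : Fin k → Y) : Vol x ≤ ∏ i : Fin k, ‖x i‖ :=
  Finset.prod_le_prod (fun _ _ => Metric.infDist_nonneg)
    (fun i _ => infDist_span_le_norm x i _)

lemma dk_bddAbove {k : ℕ} (T : X →L[ℝ] Y) :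
    BddAbove {v : ℝ | ∃ x : Fin k → X, (∀ i, ‖x i‖ = 1) ∧ v = Vol (fun i => T (x i))} := by
  refine ⟨‖T‖ ^ k, fun v hv => ?_⟩
  obtain ⟨x, hx, rfl⟩ := hv
  calc Vol (fun i => T (x i)) ≤ ∏ i : Fin k, ‖T (x i)‖ := vol_le_prod _
    _ ≤ ∏ _i : Fin k, ‖T‖ := Finset.prod_le_prod (fun _ _ => norm_nonneg _)
        (fun i _ => by simpa [hx i] using T.le_opNorm (x i))
    _ = ‖T‖ ^ k := by simp

lemma vol_le_dk {k : ℕ} (T : X →L[ℝ] Y) (x : Fin k → X) (hx : ∀ i, ‖x i‖ = 1) :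
    Vol (fun i => T (x i)) ≤ Dk k T :=
  le_csSup (dk_bddAbove T) ⟨x, hx, rfl⟩

lemma dk_eq_zero_of {k : ℕ} (T : X →L[ℝ] Y) (x₀ : Fin k → X) (hx₀ : ∀ i, ‖x₀ i‖ = 1)
    (h : ∀ x : Fin k → X, (∀ i, ‖x i‖ = 1) → Vol (fun i => T (x i)) = 0) :
    Dk k T = 0 := by
  have hs : {v : ℝ | ∃ x : Fin k → X, (∀ i, ‖x i‖ = 1) ∧ v = Vol (fun i => T (x i))} = {0} := by
    ext v
    constructor
    · rintro ⟨x, hx, rfl⟩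
      exact h x hx
    · rintro rfl
      exact ⟨x₀, hx₀, (h x₀ hx₀).symm⟩
  rw [Dk, hs, csSup_singleton]

omit [NormedAddCommGroup Y] [NormedSpace ℝ Y] in
lemma snoc_image_lt_castSucc {k : ℕ} (f : Fin k → Z) (a : Z) (i : Fin k) :
    (Fin.snoc f a : Fin (k+1) → Z) '' {j | j < i.castSucc} = f '' {j | j < i} := by
  ext z
  constructor
  · rintro ⟨j, hj, rfl⟩
    obtain ⟨j', rfl⟩ := Fin.exists_castSucc_eq.mpr (hj.trans (Fin.castSucc_lt_last i)).ne
    exact ⟨j', Fin.castSucc_lt_castSucc_iff.mp hj, by simp⟩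
  · rintro ⟨j, hj, rfl⟩
    exact ⟨j.castSucc, Fin.castSucc_lt_castSucc_iff.mpr hj, Fin.snoc_castSucc _ _ _⟩

omit [NormedAddCommGroup Y] [NormedSpace ℝ Y] in
lemma snoc_image_lt_last {k : ℕ} (f : Fin k → Z) (a : Z) :
    (Fin.snoc f a : Fin (k+1) → Z) '' {j | j < Fin.last k} = Set.range f := by
  ext z
  constructor
  · rintro ⟨j, hj, rfl⟩
    obtain ⟨j', rfl⟩ := Fin.exists_castSucc_eq.mpr hj.ne
    exact ⟨j', by simp⟩
  · rintro ⟨j, rfl⟩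
    exact ⟨j.castSucc, Fin.castSucc_lt_last j, Fin.snoc_castSucc _ _ _⟩

lemma vol_snoc {k : ℕ} (f : Fin k → Y) (a : Y) :
    Vol (Fin.snoc f a : Fin (k+1) → Y)
      = Vol f * Metric.infDist a (Submodule.span ℝ (Set.range f) : Set Y) := by
  unfold Vol
  rw [Fin.prod_univ_castSucc]
  congr 1
  · exact Finset.prod_congr rfl fun i _ => by
      rw [Fin.snoc_castSucc, snoc_image_lt_castSucc]
  · rw [Fin.snoc_last, snoc_image_lt_last]

lemma vol_comp_eq_zero {k : ℕ} (A : Y →L[ℝ] Z) (y : Fin k → Y) (h : Vol y = 0) :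
    Vol (fun i => A (y i)) = 0 := by
  unfold Vol at h ⊢
  obtain ⟨i, -, hi⟩ := Finset.prod_eq_zero_iff.mp h
  apply Finset.prod_eq_zero (Finset.mem_univ i)
  have hne : (Submodule.span ℝ (y '' {j | j < i}) : Set Y).Nonempty :=
    ⟨0, Submodule.zero_mem _⟩
  have hmem : y i ∈ closure (Submodule.span ℝ (y '' {j | j < i}) : Set Y) :=
    (Metric.mem_closure_iff_infDist_zero hne).mpr hi
  have hsub : A '' (Submodule.span ℝ (y '' {j | j < i}) : Set Y)
      ⊆ (Submodule.span ℝ ((fun i => A (y i)) '' {j | j < i}) : Set Z) := by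
    intro z hz
    obtain ⟨u, hu, rfl⟩ := hz
    have hz' : A u ∈ Submodule.map (A : Y →ₗ[ℝ] Z) (Submodule.span ℝ (y '' {j | j < i})) :=
      ⟨u, hu, rfl⟩
    rw [Submodule.map_span (A : Y →ₗ[ℝ] Z) (y '' {j | j < i})] at hz'
    rwa [Set.image_image] at hz'
  have hm2 : A (y i) ∈ closure
      (Submodule.span ℝ ((fun i => A (y i)) '' {j | j < i}) : Set Z) :=
    closure_mono hsub (image_closure_subset_closure_image A.continuous ⟨y i, hmem, rfl⟩)
  exact (Metric.mem_closure_iff_infDist_zero ⟨0, Submodule.zero_mem _⟩).mp hm2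

end Aux

/-- in the setting of the pathwise MET, with `T^n = T_{n-1} ∘ ⋯ ∘ T_0`,
`lim (1/n) log D_m(T^n) = m·l̄`, `lim (1/n) log D_{m+1}(T^n) ≤ m·l̄ + l̲`, unit vectors
`e¹_n,…,eᵐ_n` almost attaining `D_m(T^n)`, and a projection `π n` onto
`E²_n = T^n(span e_n)` of norm `≤ √m` (whose kernel `F²_n` is a closed complement, with
`F_n = (T^n)^{-1}(F²_n)`), every unit vector `v ∈ F_n` satisfies
`‖T^n v‖ ≤ 2(√m + 1) D_{m+1}(T^n)/D_m(T^n)`. -/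
theorem stmt19 (V : ℕ → Type*) [∀ j, NormedAddCommGroup (V j)] [∀ j, NormedSpace ℝ (V j)]
    [∀ j, CompleteSpace (V j)]
    (T : ∀ j, V j →L[ℝ] V (j + 1))
    (Tpow : ∀ n, V 0 →L[ℝ] V n)
    (hTpow0 : Tpow 0 = ContinuousLinearMap.id ℝ (V 0))
    (hTpowS : ∀ n, Tpow (n + 1) = (T n).comp (Tpow n))
    (m : ℕ) (hm : 1 ≤ m) (lbar lunder : ℝ) (hl : lunder < lbar)
    (ha : Tendsto (fun n : ℕ => (1 / (n : ℝ)) * Real.log (Dk m (Tpow n)))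
      atTop (nhds (m * lbar)))
    (hb : ∃ L : ℝ, L ≤ m * lbar + lunder ∧
      Tendsto (fun n : ℕ => (1 / (n : ℝ)) * Real.log (Dk (m + 1) (Tpow n))) atTop (nhds L))
    (e : ℕ → Fin m → V 0) (he1 : ∀ n i, ‖e n i‖ = 1)
    (hevol : ∀ n, (1 / 2) * Dk m (Tpow n) ≤ Vol (fun i => Tpow n (e n i)))
    (π : ∀ n, V n →L[ℝ] V n)
    (hπmem : ∀ n w, π n w ∈ Submodule.span ℝ (Set.range (fun i => Tpow n (e n i))))
    (hπid : ∀ n, ∀ w ∈ Submodule.span ℝ (Set.range (fun i => Tpow n (e n i))), π n w = w)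
    (hπnorm : ∀ n, ‖π n‖ ≤ Real.sqrt m) :
    ∀ n (v : V 0), ‖v‖ = 1 → π n (Tpow n v) = 0 →
      ‖Tpow n v‖ ≤ 2 * (Real.sqrt m + 1) * Dk (m + 1) (Tpow n) / Dk m (Tpow n) := by
  intro n v hv hπv
  have hDm_nonneg : 0 ≤ Dk m (Tpow n) :=
    le_trans (vol_nonneg _) (vol_le_dk (Tpow n) (e n) (he1 n))
  by_cases hD : Dk m (Tpow n) = 0
  · -- degenerate case : derive a contradiction from the limit hypotheses
    exfalso
    -- D_m(T^N) = 0 for all N ≥ n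
    have hzero : ∀ N, n ≤ N → Dk m (Tpow N) = 0 := by
      intro N hN
      induction N, hN using Nat.le_induction with
      | base => exact hD
      | succ N hN ih =>
        refine dk_eq_zero_of (Tpow (N+1)) (e (N+1)) (he1 (N+1)) (fun x hx => ?_)
        have hvx : Vol (fun i => Tpow N (x i)) = 0 :=
          le_antisymm (le_of_le_of_eq (vol_le_dk (Tpow N) x hx) ih) (vol_nonneg _)
        have := vol_comp_eq_zero (T N) (fun i => Tpow N (x i)) hvx
        simpa [hTpowS N] using this
    -- hence D_{m+1}(T^N) = 0 for all N ≥ n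
    have hzero1 : ∀ N, n ≤ N → Dk (m+1) (Tpow N) = 0 := by
      intro N hN
      refine dk_eq_zero_of (Tpow N) (fun _ => e N ⟨0, hm⟩) (fun _ => he1 N _) (fun x hx => ?_)
      have hinit : Vol (fun i : Fin m => Tpow N (Fin.init x i)) = 0 :=
        le_antisymm (le_of_le_of_eq
          (vol_le_dk (Tpow N) (Fin.init x) (fun i => hx i.castSucc)) (hzero N hN))
          (vol_nonneg _)
      have heq : (fun i : Fin (m+1) => Tpow N (x i))
          = Fin.snoc (fun i : Fin m => Tpow N (Fin.init x i)) (Tpow N (x (Fin.last m))) := by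
        funext i
        refine Fin.lastCases ?_ (fun j => ?_) i <;> simp [Fin.init]
      rw [heq, vol_snoc, hinit, zero_mul]
    -- m * lbar = 0
    have hma : (m : ℝ) * lbar = 0 := by
      refine tendsto_nhds_unique ha (Tendsto.congr' ?_ tendsto_const_nhds)
      filter_upwards [eventually_ge_atTop n] with N hN
      rw [hzero N hN, Real.log_zero, mul_zero]
    obtain ⟨L, hL, hbt⟩ := hb
    have hLz : L = 0 := by
      refine (tendsto_nhds_unique hbt (Tendsto.congr' ?_ tendsto_const_nhds)).symm.symm
      filter_upwards [eventually_ge_atTop n] with N hN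
      rw [hzero1 N hN, Real.log_zero, mul_zero]
    have hmr : (1 : ℝ) ≤ (m : ℝ) := by exact_mod_cast hm
    have hlbar : lbar = 0 := by
      rcases mul_eq_zero.mp hma with h | h
      · linarith
      · exact h
    rw [hlbar, mul_zero, zero_add] at hL
    rw [hLz] at hL
    rw [hlbar] at hl
    linarith
  · have hDpos : 0 < Dk m (Tpow n) := lt_of_le_of_ne hDm_nonneg (Ne.symm hD)
    set B := Tpow n
    set w := B v with hw
    set S : Set (V n) := (Submodule.span ℝ (Set.range (fun i => B (e n i))) : Set (V n))
      with hS
    have hsq : (0:ℝ) ≤ Real.sqrt m := Real.sqrt_nonneg m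
    have hs : (0:ℝ) < Real.sqrt m + 1 := by linarith
    -- Step A : distance from w to S is at least ‖w‖/(√m + 1)
    have hstepA : ‖w‖ / (Real.sqrt m + 1) ≤ Metric.infDist w S := by
      refine not_lt.mp fun hlt => ?_
      obtain ⟨u, hu, hd⟩ := (Metric.infDist_lt_iff ⟨0, Submodule.zero_mem _⟩).mp hlt
      have hid : π n u = u := hπid n u hu
      have h1 : ‖u‖ = ‖π n (u - w)‖ := by rw [map_sub, hπv, hid, sub_zero]
      have h2 : ‖π n (u - w)‖ ≤ Real.sqrt m * ‖u - w‖ :=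
        le_trans ((π n).le_opNorm _)
          (mul_le_mul_of_nonneg_right (hπnorm n) (norm_nonneg _))
      have h3 : ‖w‖ ≤ ‖w - u‖ + ‖u‖ := by
        simpa using norm_add_le (w - u) u
      have h4 : ‖u - w‖ = ‖w - u‖ := norm_sub_rev u w
      have hdd : dist w u = ‖w - u‖ := dist_eq_norm w u
      rw [hdd] at hd
      rw [lt_div_iff₀ hs] at hd
      nlinarith [norm_nonneg (w - u)]
    -- Step B : volume of the extended family
    have hxunit : ∀ i, ‖(Fin.snoc (e n) v : Fin (m+1) → V 0) i‖ = 1 := by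
      intro i
      refine Fin.lastCases ?_ (fun j => ?_) i <;> simp [hv, he1 n]
    have hsnoc : (fun i => B ((Fin.snoc (e n) v : Fin (m+1) → V 0) i))
        = (Fin.snoc (fun i => B (e n i)) w : Fin (m+1) → V n) := by
      funext i
      refine Fin.lastCases ?_ (fun j => ?_) i <;> simp [hw]
    have hvolsnoc : Vol (fun i => B ((Fin.snoc (e n) v : Fin (m+1) → V 0) i))
        = Vol (fun i => B (e n i)) * Metric.infDist w S := by
      rw [hsnoc, vol_snoc]
    have hle : Vol (fun i => B ((Fin.snoc (e n) v : Fin (m+1) → V 0) i))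
        ≤ Dk (m+1) B := vol_le_dk B _ hxunit
    -- combine
    have hmain : (1/2) * Dk m B * (‖w‖ / (Real.sqrt m + 1)) ≤ Dk (m+1) B := by
      calc (1/2) * Dk m B * (‖w‖ / (Real.sqrt m + 1))
          ≤ Vol (fun i => B (e n i)) * Metric.infDist w S :=
            mul_le_mul (hevol n) hstepA (by positivity) (vol_nonneg _)
        _ = Vol (fun i => B ((Fin.snoc (e n) v : Fin (m+1) → V 0) i)) := hvolsnoc.symm
        _ ≤ Dk (m+1) B := hle
    have h2' : (1/2) * Dk m B * ‖w‖ ≤ Dk (m+1) B * (Real.sqrt m + 1) := by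
      rw [← div_le_iff₀ hs, mul_div_assoc]
      exact hmain
    rw [le_div_iff₀ hDpos]
    nlinarith [h2']
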